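/- Let 0 < q < 1. Then for every nonnegative integer n and every complex z, (q;q)_n S_n(z;q) converges to A_q(z) as n \to \infty, uniformly on compact subsets of the complex plane. In particular, \lim_{n\to\infty} S_n(z;q) = A_q(z)/(q;q)_\infty. -/

import Mathlib

open Finset Filter

/-- `(q;q)_k` as a complex number. -/
noncomputable def qPochC (q : ℝ) (k : ℕ) : ℂ := ∏ i ∈ range k, (1 - (q : ℂ) ^ (i + 1))

/-- `(q;q)_∞ = ∏_{i=1}^∞ (1-q^i)` as a complex number. -/
noncomputable def qPochInfC (q : ℝ) : ℂ := ∏' i : ℕ, (1 - (q : ℂ) ^ (i + 1))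

/-- The Stieltjes-Wigert polynomial `S_n(z;q)`. -/
noncomputable def SW (q : ℝ) (n : ℕ) (z : ℂ) : ℂ :=
  ∑ j ∈ range (n + 1), (q : ℂ) ^ (j ^ 2) * (-z) ^ j / (qPochC q j * qPochC q (n - j))

/-- The q-Airy function. -/
noncomputable def qAiry (q : ℝ) (z : ℂ) : ℂ :=
  ∑' k : ℕ, (q : ℂ) ^ (k ^ 2) * (-z) ^ k / qPochC q k

/-- `(q;q)_k` as a real number. -/
noncomputable def qPochR (q : ℝ) (k : ℕ) : ℝ := ∏ i ∈ range k, (1 - q ^ (i + 1))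

section aux

variable {q : ℝ}

lemma factor_pos (hq0 : 0 < q) (hq1 : q < 1) (i : ℕ) : 0 < 1 - q ^ (i + 1) := by
  have : q ^ (i + 1) < 1 := pow_lt_one₀ hq0.le hq1 (Nat.succ_ne_zero i)
  linarith

lemma qPochC_eq (q : ℝ) (k : ℕ) : qPochC q k = ((qPochR q k : ℝ) : ℂ) := by
  unfold qPochC qPochR
  push_cast
  rfl

lemma qPochR_pos (hq0 : 0 < q) (hq1 : q < 1) (k : ℕ) : 0 < qPochR q k :=
  Finset.prod_pos fun i _ => factor_pos hq0 hq1 i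

lemma qPochC_ne_zero (hq0 : 0 < q) (hq1 : q < 1) (k : ℕ) : qPochC q k ≠ 0 := by
  rw [qPochC_eq]
  exact_mod_cast (qPochR_pos hq0 hq1 k).ne'

lemma log_summable (hq0 : 0 < q) (hq1 : q < 1) :
    Summable fun n : ℕ => Real.log (1 - q ^ (n + 1)) := by
  have hsum : Summable fun n : ℕ => (q / (1 - q)) * q ^ n :=
    (summable_geometric_of_lt_one hq0.le hq1).mul_left _
  refine Summable.of_norm_bounded hsum fun n => ?_
  have hpos := factor_pos hq0 hq1 n
  have h1 : q ^ (n + 1) ≤ q := by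
    calc q ^ (n + 1) ≤ q ^ 1 := pow_le_pow_of_le_one hq0.le hq1.le (Nat.one_le_iff_ne_zero.2 (Nat.succ_ne_zero n))
    _ = q := pow_one q
  have hx1 : 1 - q ^ (n + 1) ≤ 1 := by
    have : 0 ≤ q ^ (n + 1) := pow_nonneg hq0.le _
    linarith
  have hlog_nonpos : Real.log (1 - q ^ (n + 1)) ≤ 0 := Real.log_nonpos (by linarith) hx1
  rw [Real.norm_eq_abs, abs_of_nonpos hlog_nonpos]
  have hinv : -Real.log (1 - q ^ (n + 1)) = Real.log ((1 - q ^ (n + 1))⁻¹) := by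
    rw [Real.log_inv]
  rw [hinv]
  have hle : Real.log ((1 - q ^ (n + 1))⁻¹) ≤ (1 - q ^ (n + 1))⁻¹ - 1 :=
    Real.log_le_sub_one_of_pos (by positivity)
  have h2 : (1 - q ^ (n + 1))⁻¹ - 1 = q ^ (n + 1) / (1 - q ^ (n + 1)) := by
    field_simp
    ring
  have h3 : q ^ (n + 1) / (1 - q ^ (n + 1)) ≤ q ^ (n + 1) / (1 - q) := by
    apply div_le_div_of_nonneg_left (pow_nonneg hq0.le _) (by linarith) (by linarith)
  have h4 : q ^ (n + 1) / (1 - q) = q / (1 - q) * q ^ n := by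
    rw [pow_succ]; ring
  linarith

lemma hasProdR (hq0 : 0 < q) (hq1 : q < 1) :
    HasProd (fun i : ℕ => 1 - q ^ (i + 1)) (∏' i : ℕ, (1 - q ^ (i + 1))) :=
  (Real.multipliable_of_summable_log (fun n => factor_pos hq0 hq1 n) (log_summable hq0 hq1)).hasProd

lemma tprodR_pos (hq0 : 0 < q) (hq1 : q < 1) : 0 < ∏' i : ℕ, (1 - q ^ (i + 1)) := by
  have : Real.exp (∑' i : ℕ, Real.log (1 - q ^ (i + 1))) = ∏' i : ℕ, (1 - q ^ (i + 1)) :=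
    Real.rexp_tsum_eq_tprod (fun n => factor_pos hq0 hq1 n) (log_summable hq0 hq1)
  rw [← this]
  exact Real.exp_pos _

lemma tendsto_qPochR (hq0 : 0 < q) (hq1 : q < 1) :
    Tendsto (fun n => qPochR q n) atTop (nhds (∏' i : ℕ, (1 - q ^ (i + 1)))) :=
  (hasProdR hq0 hq1).tendsto_prod_nat

lemma qPochR_anti (hq0 : 0 < q) (hq1 : q < 1) {k n : ℕ} (h : k ≤ n) :
    qPochR q n ≤ qPochR q k := by
  have hsplit : qPochR q k * ∏ i ∈ Ico k n, (1 - q ^ (i + 1)) = qPochR q n := by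
    simp only [qPochR, Finset.range_eq_Ico]
    exact Finset.prod_Ico_consecutive _ (Nat.zero_le k) h
  rw [← hsplit]
  have h1 : ∏ i ∈ Ico k n, (1 - q ^ (i + 1)) ≤ 1 :=
    Finset.prod_le_one (fun i _ => (factor_pos hq0 hq1 i).le)
      (fun i _ => by have : 0 < q ^ (i + 1) := pow_pos hq0 _; linarith)
  calc qPochR q k * ∏ i ∈ Ico k n, (1 - q ^ (i + 1)) ≤ qPochR q k * 1 :=
        mul_le_mul_of_nonneg_left h1 (qPochR_pos hq0 hq1 k).le
    _ = qPochR q k := mul_one _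

lemma tprodR_le (hq0 : 0 < q) (hq1 : q < 1) (k : ℕ) :
    (∏' i : ℕ, (1 - q ^ (i + 1))) ≤ qPochR q k :=
  le_of_tendsto (tendsto_qPochR hq0 hq1)
    (eventually_atTop.2 ⟨k, fun _ hn => qPochR_anti hq0 hq1 hn⟩)

lemma qPochInfC_eq (hq0 : 0 < q) (hq1 : q < 1) :
    qPochInfC q = ((∏' i : ℕ, (1 - q ^ (i + 1)) : ℝ) : ℂ) := by
  have h := (hasProdR hq0 hq1).map Complex.ofRealHom Complex.continuous_ofReal
  have h2 : (Complex.ofRealHom ∘ fun i : ℕ => 1 - q ^ (i + 1)) =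
      fun i : ℕ => 1 - (q : ℂ) ^ (i + 1) := by
    funext i; simp [Complex.ofRealHom]
  rw [h2] at h
  exact h.tprod_eq

/-- The summable majorant. -/
noncomputable def Mmaj (q R : ℝ) (j : ℕ) : ℝ := q ^ (j ^ 2) * R ^ j / ∏' i : ℕ, (1 - q ^ (i + 1))

lemma Mmaj_nonneg (hq0 : 0 < q) (hq1 : q < 1) {R : ℝ} (hR : 0 ≤ R) (j : ℕ) :
    0 ≤ Mmaj q R j := by
  have := tprodR_pos hq0 hq1
  unfold Mmaj; positivity

lemma Mmaj_summable (hq0 : 0 < q) (hq1 : q < 1) {R : ℝ} (hR : 0 ≤ R) :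
    Summable (Mmaj q R) := by
  have hL := tprodR_pos hq0 hq1
  have htend : Tendsto (fun j : ℕ => q ^ (2 * j + 1) * R) atTop (nhds 0) := by
    have h1 : Tendsto (fun j : ℕ => q ^ (2 * j + 1)) atTop (nhds 0) := by
      have h2 : Tendsto (fun j : ℕ => q ^ j) atTop (nhds 0) :=
        tendsto_pow_atTop_nhds_zero_of_lt_one hq0.le hq1
      have := (h2.comp (tendsto_atTop_mono (fun j => by omega : ∀ j : ℕ, j ≤ 2 * j + 1) tendsto_id))
      exact this
    simpa using h1.mul_const R
  have hev : ∀ᶠ j : ℕ in atTop, q ^ (2 * j + 1) * R ≤ 1 / 2 :=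
    htend.eventually_le_const (by norm_num)
  refine summable_of_ratio_norm_eventually_le (r := 1 / 2) (by norm_num) ?_
  filter_upwards [hev] with j hj
  have hMn : 0 ≤ Mmaj q R j := Mmaj_nonneg hq0 hq1 hR j
  have hMs : 0 ≤ Mmaj q R (j + 1) := Mmaj_nonneg hq0 hq1 hR (j + 1)
  rw [Real.norm_eq_abs, Real.norm_eq_abs, abs_of_nonneg hMs, abs_of_nonneg hMn]
  have key : Mmaj q R (j + 1) = (q ^ (2 * j + 1) * R) * Mmaj q R j := by
    unfold Mmaj
    have : (j + 1) ^ 2 = 2 * j + 1 + j ^ 2 := by ring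
    rw [this, pow_add, pow_succ]
    ring
  rw [key]
  have hq2 : 0 ≤ q ^ (2 * j + 1) * R := by positivity
  exact mul_le_mul_of_nonneg_right hj hMn

/-- A single term of the q-Airy series. -/
noncomputable def gC (q : ℝ) (j : ℕ) (z : ℂ) : ℂ := (q : ℂ) ^ (j ^ 2) * (-z) ^ j / qPochC q j

lemma gC_norm_le (hq0 : 0 < q) (hq1 : q < 1) {R : ℝ} (j : ℕ) {z : ℂ} (hz : ‖z‖ ≤ R) :
    ‖gC q j z‖ ≤ Mmaj q R j := by
  have hL := tprodR_pos hq0 hq1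
  have hP := qPochR_pos hq0 hq1 j
  have hR : 0 ≤ R := le_trans (norm_nonneg z) hz
  have hnorm : ‖gC q j z‖ = q ^ (j ^ 2) * ‖z‖ ^ j / qPochR q j := by
    rw [gC, qPochC_eq, norm_div, norm_mul, norm_pow, norm_pow, norm_neg,
      Complex.norm_real, Complex.norm_real, Real.norm_eq_abs, Real.norm_eq_abs,
      abs_of_pos hq0, abs_of_pos hP]
  rw [hnorm, Mmaj]
  apply div_le_div₀ (by positivity)
    (mul_le_mul_of_nonneg_left (pow_le_pow_left₀ (norm_nonneg z) hz j) (by positivity))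
    hL (tprodR_le hq0 hq1 j)

lemma gC_summable (hq0 : 0 < q) (hq1 : q < 1) (z : ℂ) : Summable (fun j => gC q j z) :=
  Summable.of_norm_bounded (Mmaj_summable hq0 hq1 (norm_nonneg z))
    fun j => gC_norm_le hq0 hq1 j le_rfl

lemma qAiry_eq_tsum_gC (q : ℝ) (z : ℂ) : qAiry q z = ∑' j, gC q j z := rfl

/-- The ratio `(q;q)_n / (q;q)_{n-j}`. -/
noncomputable def rat (q : ℝ) (n j : ℕ) : ℝ := qPochR q n / qPochR q (n - j)

lemma rat_mem (hq0 : 0 < q) (hq1 : q < 1) (n j : ℕ) : 0 < rat q n j ∧ rat q n j ≤ 1 := by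
  have h1 := qPochR_pos hq0 hq1 n
  have h2 := qPochR_pos hq0 hq1 (n - j)
  constructor
  · exact div_pos h1 h2
  · rw [rat, div_le_one h2]
    exact qPochR_anti hq0 hq1 (Nat.sub_le n j)

lemma rat_tendsto (hq0 : 0 < q) (hq1 : q < 1) (j : ℕ) :
    Tendsto (fun n => rat q n j) atTop (nhds 1) := by
  have hL := tprodR_pos hq0 hq1
  have h1 := tendsto_qPochR hq0 hq1
  have h2 : Tendsto (fun n => qPochR q (n - j)) atTop
      (nhds (∏' i : ℕ, (1 - q ^ (i + 1)))) := h1.comp (tendsto_sub_atTop_nat j)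
  have := h1.div h2 hL.ne'
  rw [div_self hL.ne'] at this
  exact this

/-- Key algebraic identity. -/
lemma prod_mul_SW (hq0 : 0 < q) (hq1 : q < 1) (n : ℕ) (z : ℂ) :
    qPochC q n * SW q n z = ∑ j ∈ range (n + 1), gC q j z * ((rat q n j : ℝ) : ℂ) := by
  rw [SW, Finset.mul_sum]
  refine Finset.sum_congr rfl fun j _ => ?_
  rw [gC, rat, qPochC_eq, qPochC_eq q j, qPochC_eq q (n - j)]
  have h1 : (qPochR q j : ℂ) ≠ 0 := by
    exact_mod_cast (qPochR_pos hq0 hq1 j).ne'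
  have h2 : (qPochR q (n - j) : ℂ) ≠ 0 := by
    exact_mod_cast (qPochR_pos hq0 hq1 (n - j)).ne'
  push_cast
  field_simp

end aux

theorem wigert_limit (q : ℝ) (hq0 : 0 < q) (hq1 : q < 1) :
    (∀ K : Set ℂ, IsCompact K →
      TendstoUniformlyOn (fun n z => qPochC q n * SW q n z) (qAiry q) atTop K) ∧
    ∀ z : ℂ, Tendsto (fun n => SW q n z) atTop (nhds (qAiry q z / qPochInfC q)) := by
  have hL := tprodR_pos hq0 hq1
  have main : ∀ K : Set ℂ, IsCompact K →
      TendstoUniformlyOn (fun n z => qPochC q n * SW q n z) (qAiry q) atTop K := by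
    intro K hK
    obtain ⟨r, hr⟩ := hK.isBounded.subset_closedBall 0
    set R : ℝ := max r 0 with hRdef
    have hR0 : 0 ≤ R := le_max_right r 0
    have hzR : ∀ z ∈ K, ‖z‖ ≤ R := by
      intro z hz
      have := hr hz
      rw [Metric.mem_closedBall, dist_zero_right] at this
      exact this.trans (le_max_left r 0)
    have hM := Mmaj_summable hq0 hq1 (q := q) hR0
    rw [Metric.tendstoUniformlyOn_iff]
    intro ε hε
    -- choose J with tail < ε/3
    have htail : Tendsto (fun J : ℕ => ∑' k, Mmaj q R (k + J)) atTop (nhds 0) :=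
      tendsto_sum_nat_add _
    obtain ⟨J, hJ⟩ := (htail.eventually (gt_mem_nhds (by linarith : (0:ℝ) < ε / 3))).exists
    -- head goes to zero
    have hhead : Tendsto (fun n => ∑ j ∈ range J, Mmaj q R j * |rat q n j - 1|)
        atTop (nhds 0) := by
      have : Tendsto (fun n => ∑ j ∈ range J, Mmaj q R j * |rat q n j - 1|)
          atTop (nhds (∑ j ∈ range J, Mmaj q R j * |(1:ℝ) - 1|)) := by
        apply tendsto_finset_sum
        intro j _
        have h1 : Tendsto (fun n => rat q n j - 1) atTop (nhds (1 - 1)) :=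
          (rat_tendsto hq0 hq1 j).sub tendsto_const_nhds
        have h2 : Tendsto (fun n => |rat q n j - 1|) atTop (nhds |(1:ℝ) - 1|) :=
          h1.abs
        exact tendsto_const_nhds.mul h2
      simpa using this
    have hhead' : ∀ᶠ n : ℕ in atTop,
        ∑ j ∈ range J, Mmaj q R j * |rat q n j - 1| < ε / 3 :=
      hhead.eventually (gt_mem_nhds (by linarith : (0:ℝ) < ε / 3))
    filter_upwards [hhead', eventually_ge_atTop J] with n hn hnJ z hzK
    have hz := hzR z hzK
    -- the decomposition
    have hsum := gC_summable hq0 hq1 (q := q) z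
    have hdecomp : qAiry q z =
        ∑ j ∈ range (n + 1), gC q j z + ∑' k, gC q (k + (n + 1)) z := by
      rw [qAiry_eq_tsum_gC, ← Summable.sum_add_tsum_nat_add (n + 1) hsum]
    have hprodSW := prod_mul_SW hq0 hq1 n z
    have hdiff : qAiry q z - qPochC q n * SW q n z =
        (∑ j ∈ range (n + 1), gC q j z * (1 - ((rat q n j : ℝ) : ℂ))) +
          ∑' k, gC q (k + (n + 1)) z := by
      have hsub : ∑ j ∈ range (n + 1), gC q j z * (1 - ((rat q n j : ℝ) : ℂ)) =
          ∑ j ∈ range (n + 1), gC q j z - ∑ j ∈ range (n + 1), gC q j z * ((rat q n j : ℝ) : ℂ) := by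
        rw [← Finset.sum_sub_distrib]
        exact Finset.sum_congr rfl fun j _ => by ring
      rw [hdecomp, hprodSW, hsub]
      ring
    rw [dist_eq_norm, hdiff]
    -- bound the three pieces
    have hbd_term : ∀ j, ‖gC q j z * (1 - ((rat q n j : ℝ) : ℂ))‖ ≤
        Mmaj q R j * |rat q n j - 1| := by
      intro j
      rw [norm_mul]
      apply mul_le_mul (gC_norm_le hq0 hq1 j hz) ?_ (norm_nonneg _)
        (Mmaj_nonneg hq0 hq1 hR0 j)
      have : (1 - ((rat q n j : ℝ) : ℂ)) = (((1 - rat q n j : ℝ) : ℂ)) := by push_cast; ring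
      rw [this, Complex.norm_real, Real.norm_eq_abs, abs_sub_comm]
    -- split head and middle
    have hsplit : range (n + 1) = range J ∪ Ico J (n + 1) := by
      rw [Finset.range_eq_Ico, ← Finset.Ico_union_Ico_eq_Ico (Nat.zero_le J) (by omega : J ≤ n + 1), Finset.range_eq_Ico]
    have hmid : ∑ j ∈ Ico J (n + 1), Mmaj q R j * |rat q n j - 1| ≤
        ∑' k, Mmaj q R (k + J) := by
      have h1 : ∀ j ∈ Ico J (n + 1), Mmaj q R j * |rat q n j - 1| ≤ Mmaj q R j := by
        intro j _
        have hr := rat_mem hq0 hq1 n j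
        have habs : |rat q n j - 1| ≤ 1 := by
          rw [abs_le]; constructor <;> [linarith [hr.1]; linarith [hr.2]]
        calc Mmaj q R j * |rat q n j - 1| ≤ Mmaj q R j * 1 :=
              mul_le_mul_of_nonneg_left habs (Mmaj_nonneg hq0 hq1 hR0 j)
          _ = Mmaj q R j := mul_one _
      calc ∑ j ∈ Ico J (n + 1), Mmaj q R j * |rat q n j - 1|
          ≤ ∑ j ∈ Ico J (n + 1), Mmaj q R j := Finset.sum_le_sum h1
        _ = ∑ k ∈ range (n + 1 - J), Mmaj q R (k + J) := by
            rw [Finset.sum_Ico_eq_sum_range]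
            refine Finset.sum_congr rfl fun k _ => ?_
            rw [Nat.add_comm J k]
        _ ≤ ∑' k, Mmaj q R (k + J) := by
            apply Summable.sum_le_tsum _ (fun k _ => Mmaj_nonneg hq0 hq1 hR0 _)
            exact (summable_nat_add_iff J).2 hM
    have htail2 : ‖∑' k, gC q (k + (n + 1)) z‖ ≤ ∑' k, Mmaj q R (k + J) := by
      have hsum2 : Summable fun k => Mmaj q R (k + (n + 1)) :=
        (summable_nat_add_iff (n + 1)).2 hM
      have hsumJ : Summable fun k => Mmaj q R (k + J) :=
        (summable_nat_add_iff J).2 hM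
      have h1 : ‖∑' k, gC q (k + (n + 1)) z‖ ≤ ∑' k, Mmaj q R (k + (n + 1)) := by
        apply tsum_of_norm_bounded hsum2.hasSum
        intro k
        exact gC_norm_le hq0 hq1 _ hz
      refine h1.trans ?_
      -- tail from n+1 ≤ tail from J since n+1 ≥ J and terms nonneg
      have e1 := Summable.sum_add_tsum_nat_add (f := Mmaj q R) (n + 1) hM
      have e2 := Summable.sum_add_tsum_nat_add (f := Mmaj q R) J hM
      have hheadmono : ∑ i ∈ range J, Mmaj q R i ≤ ∑ i ∈ range (n + 1), Mmaj q R i :=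
        Finset.sum_le_sum_of_subset_of_nonneg
          (Finset.range_subset_range.2 (by omega))
          (fun i _ _ => Mmaj_nonneg hq0 hq1 hR0 i)
      linarith
    calc ‖(∑ j ∈ range (n + 1), gC q j z * (1 - ((rat q n j : ℝ) : ℂ))) +
            ∑' k, gC q (k + (n + 1)) z‖
        ≤ ‖∑ j ∈ range (n + 1), gC q j z * (1 - ((rat q n j : ℝ) : ℂ))‖ +
            ‖∑' k, gC q (k + (n + 1)) z‖ := norm_add_le _ _
      _ ≤ (∑ j ∈ range (n + 1), Mmaj q R j * |rat q n j - 1|) +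
            ∑' k, Mmaj q R (k + J) := by
          exact add_le_add
            ((norm_sum_le _ _).trans (Finset.sum_le_sum fun j _ => hbd_term j)) htail2
      _ = ((∑ j ∈ range J, Mmaj q R j * |rat q n j - 1|) +
            ∑ j ∈ Ico J (n + 1), Mmaj q R j * |rat q n j - 1|) +
            ∑' k, Mmaj q R (k + J) := by
          have hdisj : Disjoint (range J) (Ico J (n + 1)) := by
            rw [Finset.range_eq_Ico]
            exact Finset.Ico_disjoint_Ico_consecutive 0 J (n + 1)
          rw [hsplit, Finset.sum_union hdisj]
      _ < ε / 3 + ε / 3 + ε / 3 := by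
          have := hmid
          linarith [hn, hmid, hJ]
      _ = ε := by ring
  refine ⟨main, fun z => ?_⟩
  have h1 : Tendsto (fun n => qPochC q n * SW q n z) atTop (nhds (qAiry q z)) :=
    (main {z} isCompact_singleton).tendsto_at rfl
  have h2 : Tendsto (fun n => qPochC q n) atTop (nhds (qPochInfC q)) := by
    rw [qPochInfC_eq hq0 hq1]
    have h3 := (Complex.continuous_ofReal.tendsto _).comp (tendsto_qPochR (q := q) hq0 hq1)
    exact h3.congr fun n => (qPochC_eq q n).symm
  have hne : qPochInfC q ≠ 0 := by
    rw [qPochInfC_eq hq0 hq1]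
    exact_mod_cast hL.ne'
  have h4 := h1.div h2 hne
  refine h4.congr fun n => ?_
  show qPochC q n * SW q n z / qPochC q n = SW q n z
  rw [mul_comm, mul_div_assoc, div_self (qPochC_ne_zero hq0 hq1 n), mul_one]
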